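/- For all integers n ≥ 1 and m ≥ 2, the number of fuzzy bitopological spaces on an n-element set X with membership values in an m-element chain M in which both fuzzy topologies have exactly 4 open sets is (τᵢ, τⱼ)_F(n, m, 4) = T(T+1)/2, where T = (m(m+1)/2)^n − 3·m^n + 2^(n−1) + 2. -/

import Mathlib

/-- A fuzzy topology on `Fin n` with membership values in the `m`-element chain `Fin m`:
a collection of fuzzy sets (functions `Fin n → Fin m`) containing the constant function
with the least value, the constant function with the greatest value, and closed under
pointwise (binary) supremum and infimum. -/
def IsFuzzyTopology {n m : ℕ} (hm : m ≠ 0) (τ : Finset (Fin n → Fin m)) : Prop :=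
  (fun _ => (⟨0, Nat.pos_of_ne_zero hm⟩ : Fin m)) ∈ τ ∧
  (fun _ => (⟨m - 1, by omega⟩ : Fin m)) ∈ τ ∧
  (∀ f ∈ τ, ∀ g ∈ τ, f ⊔ g ∈ τ) ∧
  (∀ f ∈ τ, ∀ g ∈ τ, f ⊓ g ∈ τ)

/-- `tauF n m k hm` is the number of fuzzy topologies on an `n`-element set with values in an
`m`-element chain having exactly `k` open sets. -/
noncomputable def tauF (n m k : ℕ) (hm : m ≠ 0) : ℕ :=
  Nat.card {τ : Finset (Fin n → Fin m) // IsFuzzyTopology hm τ ∧ τ.card = k}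

/-- `biTauF n m k hm` is the number of fuzzy bitopological spaces (unordered pairs of fuzzy
topologies, allowing equal ones) on an `n`-element set with values in an `m`-element chain in
which both topologies have exactly `k` open sets. -/
noncomputable def biTauF (n m k : ℕ) (hm : m ≠ 0) : ℕ :=
  Nat.card (Sym2 {τ : Finset (Fin n → Fin m) // IsFuzzyTopology hm τ ∧ τ.card = k})


instance funLEDec (n m : ℕ) : DecidableRel (fun f g : Fin n → Fin m => f ≤ g) :=
  fun f g => decidable_of_iff (∀ i, f i ≤ g i) (Pi.le_def).symm
instance funLEDec' (n m : ℕ) (f g : Fin n → Fin m) : Decidable (f ≤ g) := funLEDec n m f g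

namespace FuzzyAux

lemma card_le_pairs (m : ℕ) :
    2 * (Finset.univ.filter (fun q : Fin m × Fin m => q.1 ≤ q.2)).card = m * (m + 1) := by
  classical
  set L := Finset.univ.filter (fun q : Fin m × Fin m => q.1 ≤ q.2) with hL
  have h1 : L.card + (Finset.univ.filter (fun q : Fin m × Fin m => ¬ q.1 ≤ q.2)).card
      = m * m := by
    rw [hL, Finset.card_filter_add_card_filter_not]
    simp
  have h2 : (Finset.univ.filter (fun q : Fin m × Fin m => ¬ q.1 ≤ q.2)).card
      = (Finset.univ.filter (fun q : Fin m × Fin m => q.1 ≤ q.2 ∧ ¬ q.1 = q.2)).card := by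
    apply Finset.card_bij (fun q _ => (q.2, q.1))
    · intro q hq
      simp only [Finset.mem_filter, Finset.mem_univ, true_and] at hq ⊢
      exact ⟨le_of_not_ge hq, fun h => hq (le_of_eq h.symm)⟩
    · intro q _ q' _ h
      exact Prod.ext (congrArg Prod.snd h) (congrArg Prod.fst h)
    · intro q hq
      simp only [Finset.mem_filter, Finset.mem_univ, true_and] at hq ⊢
      exact ⟨(q.2, q.1), (lt_of_le_of_ne hq.1 hq.2).not_ge, rfl⟩
  have h3 : (L.filter (fun q => ¬ q.1 = q.2)).card + (L.filter (fun q => q.1 = q.2)).card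
      = L.card := by
    rw [add_comm, Finset.card_filter_add_card_filter_not]
  have h4 : L.filter (fun q => ¬ q.1 = q.2)
      = Finset.univ.filter (fun q : Fin m × Fin m => q.1 ≤ q.2 ∧ ¬ q.1 = q.2) := by
    rw [hL, Finset.filter_filter]
  have h5 : (L.filter (fun q => q.1 = q.2)).card = m := by
    rw [hL, Finset.filter_filter]
    rw [Finset.filter_congr (fun q _ => show (q.1 ≤ q.2 ∧ q.1 = q.2) ↔ q.1 = q.2 by
      constructor
      · exact fun h => h.2
      · exact fun h => ⟨le_of_eq h, h⟩)]
    have hb : (Finset.univ.filter (fun q : Fin m × Fin m => q.1 = q.2)).card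
        = (Finset.univ : Finset (Fin m)).card := by
      apply Finset.card_bij (fun q _ => q.1)
      · intro q _; simp
      · intro q hq q' hq' h
        simp only [Finset.mem_filter, Finset.mem_univ, true_and] at hq hq'
        exact Prod.ext h (hq ▸ hq' ▸ h)
      · intro a _
        exact ⟨(a, a), by simp, rfl⟩
    simpa using hb
  rw [h4] at h3
  have : m * (m + 1) = m * m + m := by ring
  omega

lemma card_le_fun (n m : ℕ) :
    (Finset.univ.filter
      (fun p : (Fin n → Fin m) × (Fin n → Fin m) => p.1 ≤ p.2)).card
      = (Finset.univ.filter (fun q : Fin m × Fin m => q.1 ≤ q.2)).card ^ n := by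
  classical
  rw [← Fintype.card_subtype, ← Fintype.card_subtype]
  have e : {p : (Fin n → Fin m) × (Fin n → Fin m) // p.1 ≤ p.2}
      ≃ (Fin n → {q : Fin m × Fin m // q.1 ≤ q.2}) :=
    { toFun := fun p i => ⟨(p.1.1 i, p.1.2 i), p.2 i⟩
      invFun := fun q => ⟨(fun i => (q i).1.1, fun i => (q i).1.2), fun i => (q i).2⟩
      left_inv := fun p => rfl
      right_inv := fun q => by funext i; exact Subtype.ext (Prod.ext rfl rfl) }
  rw [Fintype.card_congr e, Fintype.card_fun]
  simp

variable {n m : ℕ}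

def bo (n : ℕ) {m : ℕ} (hm : m ≠ 0) : Fin n → Fin m := fun _ => ⟨0, Nat.pos_of_ne_zero hm⟩
def tp (n : ℕ) {m : ℕ} (hm : m ≠ 0) : Fin n → Fin m := fun _ => ⟨m - 1, by omega⟩

lemma bo_le (hm : m ≠ 0) (f : Fin n → Fin m) : bo n hm ≤ f := by
  intro i; simp [bo, Fin.le_def]

lemma le_tp (hm : m ≠ 0) (f : Fin n → Fin m) : f ≤ tp n hm := by
  intro i; have := (f i).isLt; simp only [tp, Fin.le_def]; omega

lemma bo_ne_tp (hn : 1 ≤ n) (hm2 : 2 ≤ m) (hm : m ≠ 0) : bo n hm ≠ tp n hm := by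
  intro h
  have := congrFun h ⟨0, by omega⟩
  simp [bo, tp, Fin.ext_iff] at this
  omega

lemma isFuzzy_iff (hm : m ≠ 0) (τ : Finset (Fin n → Fin m)) :
    IsFuzzyTopology hm τ ↔ (bo n hm ∈ τ ∧ tp n hm ∈ τ ∧
      (∀ f ∈ τ, ∀ g ∈ τ, f ⊔ g ∈ τ) ∧ (∀ f ∈ τ, ∀ g ∈ τ, f ⊓ g ∈ τ)) := Iff.rfl

instance instDecFuzzy (hm : m ≠ 0) :
    DecidablePred (fun τ : Finset (Fin n → Fin m) => IsFuzzyTopology hm τ) :=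
  fun τ => by
    unfold IsFuzzyTopology
    exact @instDecidableAnd _ _ inferInstance
      (@instDecidableAnd _ _ inferInstance (@instDecidableAnd _ _ inferInstance inferInstance))

section Structure

/-- a chain {bo, f, g, tp} is a fuzzy topology with 4 elements -/
lemma classA_topology (hn : 1 ≤ n) (hm2 : 2 ≤ m) (hm : m ≠ 0) (f g : Fin n → Fin m) (hfg : f ≤ g) (hne : f ≠ g)
    (hfb : f ≠ bo n hm) (hgt : g ≠ tp n hm) :
    IsFuzzyTopology hm ({bo n hm, f, g, tp n hm} : Finset (Fin n → Fin m)) ∧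
      ({bo n hm, f, g, tp n hm} : Finset (Fin n → Fin m)).card = 4 := by
  have hbt := bo_ne_tp hn hm2 hm
  have hgb : g ≠ bo n hm := fun h => hfb (le_antisymm (h ▸ hfg) (bo_le hm f))
  have hft : f ≠ tp n hm := fun h => hgt (le_antisymm (le_tp hm g) (h ▸ hfg))
  have hbt' : bo n hm ≠ tp n hm := hbt
  have tot : ∀ u ∈ ({bo n hm, f, g, tp n hm} : Finset (Fin n → Fin m)),
      ∀ v ∈ ({bo n hm, f, g, tp n hm} : Finset (Fin n → Fin m)), u ≤ v ∨ v ≤ u := by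
    intro u hu v hv
    simp only [Finset.mem_insert, Finset.mem_singleton] at hu hv
    have h1 := bo_le hm f; have h2 := hfg; have h3 := le_tp hm g
    have h4 := bo_le hm g; have h5 := bo_le hm (tp n hm); have h6 := le_tp hm f
    have h7 := le_tp hm (bo n hm)
    rcases hu with rfl|rfl|rfl|rfl <;> rcases hv with rfl|rfl|rfl|rfl <;> simp_all
  refine ⟨⟨by exact Finset.mem_insert_self _ _, by show tp n hm ∈ _; simp, ?_, ?_⟩, ?_⟩
  · intro u hu v hv
    rcases tot u hu v hv with h | h
    · rwa [sup_eq_right.2 h]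
    · rwa [sup_eq_left.2 h]
  · intro u hu v hv
    rcases tot u hu v hv with h | h
    · rwa [inf_eq_left.2 h]
    · rwa [inf_eq_right.2 h]
  · rw [Finset.card_insert_of_notMem (by simp [hfb.symm, hgb.symm, hbt]),
      Finset.card_insert_of_notMem (by simp [hne, hft]),
      Finset.card_insert_of_notMem (by simp [hgt]), Finset.card_singleton]

/-- an incomparable complemented pair gives a fuzzy topology with 4 elements -/
lemma classB_topology (hn : 1 ≤ n) (hm2 : 2 ≤ m) (hm : m ≠ 0) (f g : Fin n → Fin m) (hsup : f ⊔ g = tp n hm) (hinf : f ⊓ g = bo n hm)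
    (h1 : ¬ f ≤ g) (h2 : ¬ g ≤ f) :
    IsFuzzyTopology hm ({bo n hm, f, g, tp n hm} : Finset (Fin n → Fin m)) ∧
      ({bo n hm, f, g, tp n hm} : Finset (Fin n → Fin m)).card = 4 := by
  have hbt := bo_ne_tp hn hm2 hm
  have hne : f ≠ g := fun h => h1 (h ▸ le_refl f)
  have hfb : f ≠ bo n hm := fun h => h1 (h ▸ bo_le hm g)
  have hgb : g ≠ bo n hm := fun h => h2 (h ▸ bo_le hm f)
  have hft : f ≠ tp n hm := fun h => h2 (h ▸ le_tp hm g)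
  have hgt : g ≠ tp n hm := fun h => h1 (h ▸ le_tp hm f)
  have bsup : ∀ x : Fin n → Fin m, bo n hm ⊔ x = x := fun x => sup_eq_right.2 (bo_le hm x)
  have bsup' : ∀ x : Fin n → Fin m, x ⊔ bo n hm = x := fun x => sup_eq_left.2 (bo_le hm x)
  have tsup : ∀ x : Fin n → Fin m, tp n hm ⊔ x = tp n hm := fun x => sup_eq_left.2 (le_tp hm x)
  have tsup' : ∀ x : Fin n → Fin m, x ⊔ tp n hm = tp n hm := fun x => sup_eq_right.2 (le_tp hm x)
  have binf : ∀ x : Fin n → Fin m, bo n hm ⊓ x = bo n hm := fun x => inf_eq_left.2 (bo_le hm x)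
  have binf' : ∀ x : Fin n → Fin m, x ⊓ bo n hm = bo n hm := fun x => inf_eq_right.2 (bo_le hm x)
  have tinf : ∀ x : Fin n → Fin m, tp n hm ⊓ x = x := fun x => inf_eq_right.2 (le_tp hm x)
  have tinf' : ∀ x : Fin n → Fin m, x ⊓ tp n hm = x := fun x => inf_eq_left.2 (le_tp hm x)
  have hsup' : g ⊔ f = tp n hm := by rw [sup_comm]; exact hsup
  have hinf' : g ⊓ f = bo n hm := by rw [inf_comm]; exact hinf
  refine ⟨⟨by exact Finset.mem_insert_self _ _, by show tp n hm ∈ _; simp, ?_, ?_⟩, ?_⟩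
  · intro u hu v hv
    simp only [Finset.mem_insert, Finset.mem_singleton] at hu hv ⊢
    rcases hu with rfl|rfl|rfl|rfl <;> rcases hv with rfl|rfl|rfl|rfl <;>
      simp [bsup, bsup', tsup, tsup', hsup, hsup']
  · intro u hu v hv
    simp only [Finset.mem_insert, Finset.mem_singleton] at hu hv ⊢
    rcases hu with rfl|rfl|rfl|rfl <;> rcases hv with rfl|rfl|rfl|rfl <;>
      simp [binf, binf', tinf, tinf', hinf, hinf']
  · rw [Finset.card_insert_of_notMem (by simp [hfb.symm, hgb.symm, hbt]),
      Finset.card_insert_of_notMem (by simp [hne, hft]),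
      Finset.card_insert_of_notMem (by simp [hgt]), Finset.card_singleton]

/-- decomposition of a 4-element fuzzy topology -/
lemma topology_decomp (hn : 1 ≤ n) (hm2 : 2 ≤ m) (hm : m ≠ 0) (τ : Finset (Fin n → Fin m)) (ht : IsFuzzyTopology hm τ)
    (hc : τ.card = 4) :
    ∃ f g, f ≠ g ∧ f ≠ bo n hm ∧ f ≠ tp n hm ∧ g ≠ bo n hm ∧ g ≠ tp n hm ∧
      τ = {bo n hm, f, g, tp n hm} ∧
      ((f ≤ g ∨ g ≤ f) ∨ (f ⊔ g = tp n hm ∧ f ⊓ g = bo n hm ∧ ¬ f ≤ g ∧ ¬ g ≤ f)) := by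
  obtain ⟨hb, htt, hsupc, hinfc⟩ := (isFuzzy_iff hm τ).1 ht
  have hbt := bo_ne_tp hn hm2 hm
  have htt' : tp n hm ∈ τ.erase (bo n hm) := Finset.mem_erase.2 ⟨Ne.symm hbt, htt⟩
  have hc2 : ((τ.erase (bo n hm)).erase (tp n hm)).card = 2 := by
    rw [Finset.card_erase_of_mem htt', Finset.card_erase_of_mem hb, hc]
  obtain ⟨f, g, hne, hfg⟩ := Finset.card_eq_two.1 hc2
  have hf : f ∈ (τ.erase (bo n hm)).erase (tp n hm) := by rw [hfg]; simp
  have hg : g ∈ (τ.erase (bo n hm)).erase (tp n hm) := by rw [hfg]; simp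
  have hfτ : f ∈ τ := Finset.mem_of_mem_erase (Finset.mem_of_mem_erase hf)
  have hgτ : g ∈ τ := Finset.mem_of_mem_erase (Finset.mem_of_mem_erase hg)
  have hft : f ≠ tp n hm := (Finset.mem_erase.1 hf).1
  have hfb : f ≠ bo n hm := (Finset.mem_erase.1 (Finset.mem_of_mem_erase hf)).1
  have hgt : g ≠ tp n hm := (Finset.mem_erase.1 hg).1
  have hgb : g ≠ bo n hm := (Finset.mem_erase.1 (Finset.mem_of_mem_erase hg)).1
  have hτeq : τ = {bo n hm, f, g, tp n hm} := by
    have e1 : insert (tp n hm) ((τ.erase (bo n hm)).erase (tp n hm)) = τ.erase (bo n hm) :=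
      Finset.insert_erase htt'
    have e2 : insert (bo n hm) (τ.erase (bo n hm)) = τ := Finset.insert_erase hb
    rw [← e2, ← e1, hfg]
    ext x
    simp [Finset.mem_insert]
    tauto
  refine ⟨f, g, hne, hfb, hft, hgb, hgt, hτeq, ?_⟩
  by_cases h1 : f ≤ g
  · exact Or.inl (Or.inl h1)
  by_cases h2 : g ≤ f
  · exact Or.inl (Or.inr h2)
  · right
    have hs : f ⊔ g ∈ τ := hsupc f hfτ g hgτ
    have hi : f ⊓ g ∈ τ := hinfc f hfτ g hgτ
    rw [hτeq] at hs hi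
    simp only [Finset.mem_insert, Finset.mem_singleton] at hs hi
    have hsup : f ⊔ g = tp n hm := by
      rcases hs with h|h|h|h
      · exact absurd (le_antisymm (h ▸ le_sup_left) (bo_le hm f)) hfb
      · exact absurd (sup_eq_left.1 h) h2
      · exact absurd (sup_eq_right.1 h) h1
      · exact h
    have hinf : f ⊓ g = bo n hm := by
      rcases hi with h|h|h|h
      · exact h
      · exact absurd (inf_eq_left.1 h) h1
      · exact absurd (inf_eq_right.1 h) h2
      · exact absurd (le_antisymm (le_tp hm g) (h ▸ inf_le_right)) hgt
    exact ⟨hsup, hinf, h1, h2⟩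

end Structure

-- chain totality helper
lemma chain_tot (hm : m ≠ 0) (f g : Fin n → Fin m) (hfg : f ≤ g) :
    ∀ u ∈ ({bo n hm, f, g, tp n hm} : Finset (Fin n → Fin m)),
      ∀ v ∈ ({bo n hm, f, g, tp n hm} : Finset (Fin n → Fin m)), u ≤ v ∨ v ≤ u := by
  intro u hu v hv
  simp only [Finset.mem_insert, Finset.mem_singleton] at hu hv
  have h1 := bo_le hm f; have h2 := hfg; have h3 := le_tp hm g
  have h4 := bo_le hm g; have h5 := bo_le hm (tp n hm); have h6 := le_tp hm f
  have h7 := le_tp hm (bo n hm)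
  rcases hu with rfl|rfl|rfl|rfl <;> rcases hv with rfl|rfl|rfl|rfl <;> simp_all

lemma sup_apply' (f g : Fin n → Fin m) (i : Fin n) : (f ⊔ g) i = f i ⊔ g i := rfl
lemma inf_apply' (f g : Fin n → Fin m) (i : Fin n) : (f ⊓ g) i = f i ⊓ g i := rfl

-- the A pairs
def Apairs (n : ℕ) {m : ℕ} (hm : m ≠ 0) : Finset ((Fin n → Fin m) × (Fin n → Fin m)) :=
  Finset.univ.filter
    (fun p => p.1 ≤ p.2 ∧ p.1 ≠ p.2 ∧ p.1 ≠ bo n hm ∧ p.2 ≠ tp n hm)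

-- the B pairs
def Bpairs (n : ℕ) {m : ℕ} (hm : m ≠ 0) : Finset ((Fin n → Fin m) × (Fin n → Fin m)) :=
  Finset.univ.filter
    (fun p => p.1 ⊔ p.2 = tp n hm ∧ p.1 ⊓ p.2 = bo n hm ∧ ¬ p.1 ≤ p.2 ∧ ¬ p.2 ≤ p.1)

lemma card_Apairs (hn : 1 ≤ n) (hm2 : 2 ≤ m) (hm : m ≠ 0) :
    ((Apairs n hm).card : ℤ)
      = (((m * (m + 1) / 2 : ℕ) : ℤ)) ^ n - 3 * (m : ℤ) ^ n + 3 := by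
  classical
  set α := (Fin n → Fin m)
  set L : Finset (α × α) := Finset.univ.filter (fun p : α × α => p.1 ≤ p.2) with hLdef
  -- card of L
  have cardL : L.card = (m * (m + 1) / 2) ^ n := by
    have h2 := card_le_pairs m
    have h3 := card_le_fun n m
    have : (Finset.univ.filter (fun q : Fin m × Fin m => q.1 ≤ q.2)).card = m * (m + 1) / 2 := by
      omega
    rw [hLdef, h3, this]
  -- split off the diagonal
  have split1 : L.card = (L.filter (fun p => p.1 = p.2)).card
      + (L.filter (fun p => ¬ p.1 = p.2)).card := by
    rw [Finset.card_filter_add_card_filter_not]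
  have count1 : (L.filter (fun p => p.1 = p.2)).card = m ^ n := by
    have hb : (L.filter (fun p => p.1 = p.2)).card = (Finset.univ : Finset α).card := by
      apply Finset.card_bij (fun p _ => p.1)
      · intro p _; simp
      · intro p hp p' hp' h
        simp only [hLdef, Finset.mem_filter] at hp hp'
        exact Prod.ext h (hp.2 ▸ hp'.2 ▸ h)
      · intro a _
        exact ⟨(a, a), by simp [hLdef], rfl⟩
    rw [hb, Finset.card_univ, Fintype.card_fun]
    simp
  set L' := L.filter (fun p => ¬ p.1 = p.2) with hL'
  have split2 : L'.card = (L'.filter (fun p => p.1 = bo n hm)).card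
      + (L'.filter (fun p => ¬ p.1 = bo n hm)).card := by
    rw [Finset.card_filter_add_card_filter_not]
  have count2 : (L'.filter (fun p => p.1 = bo n hm)).card = m ^ n - 1 := by
    have hb : (L'.filter (fun p => p.1 = bo n hm)).card
        = ((Finset.univ : Finset α).erase (bo n hm)).card := by
      apply Finset.card_bij (fun p _ => p.2)
      · intro p hp
        simp only [hL', hLdef, Finset.mem_filter, Finset.mem_univ, true_and] at hp
        obtain ⟨⟨hle, hne⟩, h1⟩ := hp
        refine Finset.mem_erase.2 ⟨fun h => hne ?_, Finset.mem_univ _⟩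
        have : p.2 ≤ p.1 := by rw [h, h1]
        exact le_antisymm hle this
      · intro p hp p' hp' h
        simp only [hL', hLdef, Finset.mem_filter] at hp hp'
        exact Prod.ext (hp.2.trans hp'.2.symm) h
      · intro a ha
        have hane : a ≠ bo n hm := (Finset.mem_erase.1 ha).1
        refine ⟨(bo n hm, a), ?_, rfl⟩
        simp [hL', hLdef, Finset.mem_filter, bo_le hm a, Ne.symm hane]
    rw [hb, Finset.card_erase_of_mem (Finset.mem_univ _), Finset.card_univ, Fintype.card_fun]
    simp
  set L'' := L'.filter (fun p => ¬ p.1 = bo n hm) with hL''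
  have split3 : L''.card = (L''.filter (fun p => p.2 = tp n hm)).card
      + (L''.filter (fun p => ¬ p.2 = tp n hm)).card := by
    rw [Finset.card_filter_add_card_filter_not]
  have count3 : (L''.filter (fun p => p.2 = tp n hm)).card = m ^ n - 2 := by
    have hb : (L''.filter (fun p => p.2 = tp n hm)).card
        = (((Finset.univ : Finset α).erase (bo n hm)).erase (tp n hm)).card := by
      apply Finset.card_bij (fun p _ => p.1)
      · intro p hp
        simp only [hL'', hL', hLdef, Finset.mem_filter, Finset.mem_univ, true_and] at hp
        obtain ⟨⟨⟨_, hne⟩, hnb⟩, h2⟩ := hp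
        exact Finset.mem_erase.2 ⟨fun h => hne (h.trans h2.symm),
          Finset.mem_erase.2 ⟨hnb, Finset.mem_univ _⟩⟩
      · intro p hp p' hp' h
        simp only [hL'', hL', hLdef, Finset.mem_filter] at hp hp'
        exact Prod.ext h (hp.2.trans hp'.2.symm)
      · intro a ha
        have hat : a ≠ tp n hm := (Finset.mem_erase.1 ha).1
        have hab : a ≠ bo n hm := (Finset.mem_erase.1 (Finset.mem_of_mem_erase ha)).1
        refine ⟨(a, tp n hm), ?_, rfl⟩
        simp [hL'', hL', hLdef, Finset.mem_filter, le_tp hm a, hat, hab]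
    rw [hb, Finset.card_erase_of_mem, Finset.card_erase_of_mem (Finset.mem_univ _),
      Finset.card_univ, Fintype.card_fun]
    · simp
      omega
    · refine Finset.mem_erase.2 ⟨?_, Finset.mem_univ _⟩
      intro h
      have := congrFun h ⟨0, by omega⟩
      simp [bo, tp, Fin.ext_iff] at this
      omega
  have count4 : L''.filter (fun p => ¬ p.2 = tp n hm) = Apairs n hm := by
    rw [hL'', hL', hLdef, Finset.filter_filter, Finset.filter_filter, Finset.filter_filter]
    apply Finset.filter_congr
    intro p _
    unfold Ne
    tauto
  have hM : 2 ≤ m ^ n := by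
    calc 2 = 2 ^ 1 := rfl
    _ ≤ 2 ^ n := Nat.pow_le_pow_right (by omega) hn
    _ ≤ m ^ n := Nat.pow_le_pow_left hm2 n
  rw [count4] at split3
  have key : (m * (m + 1) / 2) ^ n + 3 = 3 * m ^ n + (Apairs n hm).card := by
    omega
  have c1 : ((m * (m + 1) / 2 : ℕ) : ℤ) ^ n + 3
      = 3 * (m : ℤ) ^ n + ((Apairs n hm).card : ℤ) := by
    exact_mod_cast congrArg (fun x : ℕ => (x : ℤ)) key
  linarith

lemma card_Bpairs (hn : 1 ≤ n) (hm2 : 2 ≤ m) (hm : m ≠ 0) :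
    (Bpairs n hm).card + 2 = 2 ^ n := by
  classical
  set α := (Fin n → Fin m)
  set C : Finset (α × α) :=
    Finset.univ.filter (fun p : α × α => p.1 ⊔ p.2 = tp n hm ∧ p.1 ⊓ p.2 = bo n hm) with hC
  -- C has 2^n elements
  have cardC : C.card = 2 ^ n := by
    have himg : C = Finset.image
        (fun c : Fin n → Bool =>
          ((fun i => if c i then (⟨m - 1, by omega⟩ : Fin m) else ⟨0, by omega⟩),
           (fun i => if c i then (⟨0, by omega⟩ : Fin m) else ⟨m - 1, by omega⟩)))
        Finset.univ := by
      ext p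
      simp only [hC, Finset.mem_filter, Finset.mem_univ, true_and, Finset.mem_image]
      constructor
      · rintro ⟨hsup, hinf⟩
        refine ⟨fun i => decide ((p.1 i : ℕ) = m - 1), ?_⟩
        refine Prod.ext (funext fun i => ?_) (funext fun i => ?_) <;>
        · have hs : p.1 i ⊔ p.2 i = (⟨m - 1, by omega⟩ : Fin m) := congrFun hsup i
          have hi : p.1 i ⊓ p.2 i = (⟨0, by omega⟩ : Fin m) := congrFun hinf i
          rcases le_total (p.1 i) (p.2 i) with h | h
          · rw [sup_eq_right.2 h] at hs
            rw [inf_eq_left.2 h] at hi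
            have e1 : (p.1 i : ℕ) = 0 := congrArg Fin.val hi
            have e2 : (p.2 i : ℕ) = m - 1 := congrArg Fin.val hs
            dsimp only
            simp only [show (decide ((p.1 i : ℕ) = m - 1)) = false from by
              simp only [decide_eq_false_iff_not]; omega]
            simp [Fin.ext_iff, e1, e2]
          · rw [sup_eq_left.2 h] at hs
            rw [inf_eq_right.2 h] at hi
            have e1 : (p.1 i : ℕ) = m - 1 := congrArg Fin.val hs
            have e2 : (p.2 i : ℕ) = 0 := congrArg Fin.val hi
            dsimp only
            simp only [show (decide ((p.1 i : ℕ) = m - 1)) = true from by simp [e1]]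
            simp [Fin.ext_iff, e1, e2]
      · rintro ⟨c, rfl⟩
        constructor
        · funext i
          rw [sup_apply']
          dsimp only
          rcases Bool.eq_false_or_eq_true (c i) with h | h
          · rw [h, if_pos rfl, if_pos rfl]
            exact sup_eq_left.2 (by simp only [Fin.mk_le_mk]; omega)
          · rw [h, if_neg (by simp), if_neg (by simp)]
            exact sup_eq_right.2 (by simp only [Fin.mk_le_mk]; omega)
        · funext i
          rw [inf_apply']
          dsimp only
          rcases Bool.eq_false_or_eq_true (c i) with h | h
          · rw [h, if_pos rfl, if_pos rfl]
            exact inf_eq_right.2 (by simp only [Fin.mk_le_mk]; omega)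
          · rw [h, if_neg (by simp), if_neg (by simp)]
            exact inf_eq_left.2 (by simp only [Fin.mk_le_mk]; omega)
    rw [himg, Finset.card_image_of_injective _ ?_, Finset.card_univ, Fintype.card_fun]
    · simp
    · intro c c' h
      funext i
      have h1 := congrFun (congrArg Prod.fst h) i
      dsimp only at h1
      cases hc : c i <;> cases hc' : c' i <;>
        rw [hc, hc'] at h1 <;>
        simp only [Bool.false_eq_true, if_false, if_true, Fin.mk.injEq] at h1 <;>
        first
          | rfl
          | omega
  -- Bpairs = C minus the two comparable pairs
  have hbt := bo_ne_tp hn hm2 hm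
  have hBC : Bpairs n hm = (C.erase (bo n hm, tp n hm)).erase (tp n hm, bo n hm) := by
    ext p
    simp only [Bpairs, hC, Finset.mem_erase, Finset.mem_filter, Finset.mem_univ, true_and]
    constructor
    · rintro ⟨hsup, hinf, h1, h2⟩
      refine ⟨?_, ?_, hsup, hinf⟩
      · intro h
        exact h2 (by rw [show p.2 = bo n hm from congrArg Prod.snd h,
            show p.1 = tp n hm from congrArg Prod.fst h]; exact bo_le hm _)
      · intro h
        exact h1 (by rw [show p.1 = bo n hm from congrArg Prod.fst h,
            show p.2 = tp n hm from congrArg Prod.snd h]; exact bo_le hm _)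
    · rintro ⟨hne2, hne1, hsup, hinf⟩
      refine ⟨hsup, hinf, ?_, ?_⟩
      · intro hle
        exact hne1 (Prod.ext (by rw [← hinf, inf_eq_left.2 hle])
          (by rw [← hsup, sup_eq_right.2 hle]))
      · intro hle
        exact hne2 (Prod.ext (by rw [← hsup, sup_eq_left.2 hle])
          (by rw [← hinf, inf_eq_right.2 hle]))
  have hbtC : (bo n hm, tp n hm) ∈ C := by
    simp only [hC, Finset.mem_filter, Finset.mem_univ, true_and]
    exact ⟨sup_eq_right.2 (bo_le hm _), inf_eq_left.2 (bo_le hm _)⟩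
  have htbC : (tp n hm, bo n hm) ∈ C := by
    simp only [hC, Finset.mem_filter, Finset.mem_univ, true_and]
    exact ⟨sup_eq_left.2 (bo_le hm _), inf_eq_right.2 (bo_le hm _)⟩
  have htbC' : (tp n hm, bo n hm) ∈ C.erase (bo n hm, tp n hm) :=
    Finset.mem_erase.2 ⟨fun h => hbt (congrArg Prod.snd h), htbC⟩
  rw [hBC, Finset.card_erase_of_mem htbC', Finset.card_erase_of_mem hbtC, cardC]
  have h2 : 2 ≤ 2 ^ n := by
    calc 2 = 2 ^ 1 := rfl
    _ ≤ 2 ^ n := Nat.pow_le_pow_right (by omega) hn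
  omega

def chainP {n m : ℕ} (τ : Finset (Fin n → Fin m)) : Prop := ∀ u ∈ τ, ∀ v ∈ τ, u ≤ v ∨ v ≤ u

instance instDecChain (τ : Finset (Fin n → Fin m)) : Decidable (chainP τ) := by
  unfold chainP; infer_instance

instance instDecFuzzy4 (hm : m ≠ 0) :
    DecidablePred (fun τ : Finset (Fin n → Fin m) => IsFuzzyTopology hm τ ∧ τ.card = 4) :=
  fun τ => @instDecidableAnd _ _ (instDecFuzzy hm τ) inferInstance

def F4 (n : ℕ) {m : ℕ} (hm : m ≠ 0) : Finset (Finset (Fin n → Fin m)) :=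
  Finset.univ.filter (fun τ => IsFuzzyTopology hm τ ∧ τ.card = 4)

lemma TA_card (hn : 1 ≤ n) (hm2 : 2 ≤ m) (hm : m ≠ 0) :
    ((F4 n hm).filter (fun τ => chainP τ)).card = (Apairs n hm).card := by
  classical
  symm
  apply Finset.card_bij
    (fun (p : (Fin n → Fin m) × (Fin n → Fin m)) _ =>
      ({bo n hm, p.1, p.2, tp n hm} : Finset (Fin n → Fin m)))
  · intro p hp
    simp only [Apairs, Finset.mem_filter, Finset.mem_univ, true_and] at hp
    obtain ⟨h1, h2, h3, h4⟩ := hp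
    obtain ⟨ht, hc⟩ := classA_topology hn hm2 hm p.1 p.2 h1 h2 h3 h4
    simp only [F4, Finset.mem_filter, Finset.mem_univ, true_and]
    exact ⟨⟨ht, hc⟩, fun u hu v hv => chain_tot hm p.1 p.2 h1 u hu v hv⟩
  · intro p hp p' hp' h
    simp only [Apairs, Finset.mem_filter, Finset.mem_univ, true_and] at hp hp'
    obtain ⟨h1, h2, h3, h4⟩ := hp
    obtain ⟨h1', h2', h3', h4'⟩ := hp'
    have hgb : p.2 ≠ bo n hm := fun h' => h3 (le_antisymm (h' ▸ h1) (bo_le hm p.1))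
    have hft : p.1 ≠ tp n hm := fun h' => h4 (le_antisymm (le_tp hm p.2) (h' ▸ h1))
    have hgb' : p'.2 ≠ bo n hm := fun h' => h3' (le_antisymm (h' ▸ h1') (bo_le hm p'.1))
    have hft' : p'.1 ≠ tp n hm := fun h' => h4' (le_antisymm (le_tp hm p'.2) (h' ▸ h1'))
    have m1 : p.1 ∈ ({bo n hm, p'.1, p'.2, tp n hm} : Finset (Fin n → Fin m)) := by
      rw [← h]; simp
    have m2 : p.2 ∈ ({bo n hm, p'.1, p'.2, tp n hm} : Finset (Fin n → Fin m)) := by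
      rw [← h]; simp
    have m1' : p'.1 ∈ ({bo n hm, p.1, p.2, tp n hm} : Finset (Fin n → Fin m)) := by
      rw [h]; simp
    simp only [Finset.mem_insert, Finset.mem_singleton] at m1 m2 m1'
    rcases m1 with e|e|e|e
    · exact absurd e h3
    · -- p.1 = p'.1
      rcases m2 with e2|e2|e2|e2
      · exact absurd e2 hgb
      · exact absurd (e2.trans e.symm) (Ne.symm h2)
      · exact Prod.ext e e2
      · exact absurd e2 h4
    · -- p.1 = p'.2
      rcases m1' with e1|e1|e1|e1
      · exact absurd e1 h3'
      · exact absurd (e1.trans e) h2'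
      · -- p'.1 = p.2 : then p.1 ≤ p.2 = p'.1 ≤ p'.2 = p.1
        have : p.1 = p.2 := le_antisymm h1 (by calc p.2 = p'.1 := e1.symm
                                                 _ ≤ p'.2 := h1'
                                                 _ = p.1 := e.symm)
        exact absurd this h2
      · exact absurd e1 hft'
    · exact absurd e hft
  · intro τ hτ
    simp only [F4, Finset.mem_filter, Finset.mem_univ, true_and] at hτ
    obtain ⟨⟨ht, hc⟩, hch⟩ := hτ
    obtain ⟨f, g, hne, hfb, hft, hgb, hgt, hτeq, _⟩ := topology_decomp hn hm2 hm τ ht hc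
    have hfτ : f ∈ τ := by rw [hτeq]; simp
    have hgτ : g ∈ τ := by rw [hτeq]; simp
    rcases hch f hfτ g hgτ with hle | hle
    · refine ⟨(f, g), ?_, hτeq.symm⟩
      simp only [Apairs, Finset.mem_filter, Finset.mem_univ, true_and]
      exact ⟨hle, hne, hfb, hgt⟩
    · refine ⟨(g, f), ?_, ?_⟩
      · simp only [Apairs, Finset.mem_filter, Finset.mem_univ, true_and]
        exact ⟨hle, Ne.symm hne, hgb, hft⟩
      · rw [hτeq]; ext x; simp only [Finset.mem_insert, Finset.mem_singleton]; tauto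

lemma TB_card (hn : 1 ≤ n) (hm2 : 2 ≤ m) (hm : m ≠ 0) :
    (Bpairs n hm).card = 2 * ((F4 n hm).filter (fun τ => ¬ chainP τ)).card := by
  classical
  have hmap : ∀ p ∈ Bpairs n hm,
      ({bo n hm, p.1, p.2, tp n hm} : Finset (Fin n → Fin m))
        ∈ (F4 n hm).filter (fun τ => ¬ chainP τ) := by
    intro p hp
    simp only [Bpairs, Finset.mem_filter, Finset.mem_univ, true_and] at hp
    obtain ⟨hsup, hinf, h1, h2⟩ := hp
    obtain ⟨ht, hc⟩ := classB_topology hn hm2 hm p.1 p.2 hsup hinf h1 h2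
    simp only [F4, Finset.mem_filter, Finset.mem_univ, true_and]
    refine ⟨⟨ht, hc⟩, fun hch => ?_⟩
    rcases hch p.1 (by simp) p.2 (by simp) with h | h
    · exact h1 h
    · exact h2 h
  rw [Finset.card_eq_sum_card_fiberwise hmap]
  have hfibcard : ∀ τ ∈ (F4 n hm).filter (fun τ => ¬ chainP τ),
      ((Bpairs n hm).filter
        (fun p => ({bo n hm, p.1, p.2, tp n hm} : Finset (Fin n → Fin m)) = τ)).card = 2 := by
    intro τ hτ
    simp only [Finset.mem_filter] at hτ
    obtain ⟨hτF4, hnch⟩ := hτ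
    simp only [F4, Finset.mem_filter, Finset.mem_univ, true_and] at hτF4
    obtain ⟨ht, hc⟩ := hτF4
    obtain ⟨f, g, hne, hfb, hft, hgb, hgt, hτeq, hd⟩ := topology_decomp hn hm2 hm τ ht hc
    have hBcase : f ⊔ g = tp n hm ∧ f ⊓ g = bo n hm ∧ ¬ f ≤ g ∧ ¬ g ≤ f := by
      rcases hd with (hle | hle) | hB
      · exfalso
        exact hnch (by rw [hτeq]; exact chain_tot hm f g hle)
      · exfalso
        apply hnch
        have hset : ({bo n hm, f, g, tp n hm} : Finset (Fin n → Fin m))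
            = {bo n hm, g, f, tp n hm} := by
          ext x; simp only [Finset.mem_insert, Finset.mem_singleton]; tauto
        rw [hτeq, hset]
        exact chain_tot hm g f hle
      · exact hB
    obtain ⟨hsup, hinf, h1, h2⟩ := hBcase
    have hfib : (Bpairs n hm).filter
        (fun p => ({bo n hm, p.1, p.2, tp n hm} : Finset (Fin n → Fin m)) = τ)
        = {(f, g), (g, f)} := by
      ext p
      simp only [Finset.mem_filter, Finset.mem_insert, Finset.mem_singleton]
      constructor
      · rintro ⟨hp, he⟩
        simp only [Bpairs, Finset.mem_filter, Finset.mem_univ, true_and] at hp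
        obtain ⟨_, _, hp1, hp2⟩ := hp
        have hm1 : p.1 ∈ τ := by rw [← he]; simp
        have hm2' : p.2 ∈ τ := by rw [← he]; simp
        rw [hτeq] at hm1 hm2'
        simp only [Finset.mem_insert, Finset.mem_singleton] at hm1 hm2'
        have hp1b : p.1 ≠ bo n hm := fun h' => hp1 (h' ▸ bo_le hm p.2)
        have hp1t : p.1 ≠ tp n hm := fun h' => hp2 (h' ▸ le_tp hm p.2)
        have hp2b : p.2 ≠ bo n hm := fun h' => hp2 (h' ▸ bo_le hm p.1)
        have hp2t : p.2 ≠ tp n hm := fun h' => hp1 (h' ▸ le_tp hm p.1)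
        have hpne : p.1 ≠ p.2 := fun h' => hp1 (h' ▸ le_refl p.1)
        rcases hm1 with e|e|e|e
        · exact absurd e hp1b
        · rcases hm2' with e2|e2|e2|e2
          · exact absurd e2 hp2b
          · exact absurd (e.trans e2.symm) hpne
          · exact Or.inl (Prod.ext e e2)
          · exact absurd e2 hp2t
        · rcases hm2' with e2|e2|e2|e2
          · exact absurd e2 hp2b
          · exact Or.inr (Prod.ext e e2)
          · exact absurd (e.trans e2.symm) hpne
          · exact absurd e2 hp2t
        · exact absurd e hp1t
      · rintro (rfl | rfl)
        · refine ⟨?_, hτeq.symm⟩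
          simp only [Bpairs, Finset.mem_filter, Finset.mem_univ, true_and]
          exact ⟨hsup, hinf, h1, h2⟩
        · constructor
          · simp only [Bpairs, Finset.mem_filter, Finset.mem_univ, true_and]
            exact ⟨by rw [sup_comm]; exact hsup, by rw [inf_comm]; exact hinf, h2, h1⟩
          · rw [hτeq]; ext x; simp only [Finset.mem_insert, Finset.mem_singleton]; tauto
    rw [hfib]
    rw [Finset.card_insert_of_notMem, Finset.card_singleton]
    simp only [Finset.mem_singleton]
    intro h
    exact hne (congrArg Prod.fst h)
  rw [Finset.sum_congr rfl hfibcard, Finset.sum_const, smul_eq_mul, mul_comm]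

lemma F4_split (hm : m ≠ 0) :
    (F4 n hm).card = ((F4 n hm).filter (fun τ => chainP τ)).card
      + ((F4 n hm).filter (fun τ => ¬ chainP τ)).card := by
  rw [Finset.card_filter_add_card_filter_not]

lemma biTauF_formula (n m : ℕ) (hn : 1 ≤ n) (hm2 : 2 ≤ m) (hm : m ≠ 0) :
    (biTauF n m 4 hm : ℤ) =
      (((m * (m + 1) / 2 : ℕ) : ℤ) ^ n - 3 * (m : ℤ) ^ n + 2 ^ (n - 1) + 2) *
        ((((m * (m + 1) / 2 : ℕ) : ℤ) ^ n - 3 * (m : ℤ) ^ n + 2 ^ (n - 1) + 2) + 1) / 2 := by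
  classical
  set N := (F4 n hm).card with hN
  -- biTauF = N (N+1) / 2
  have e0 : Fintype.card {τ : Finset (Fin n → Fin m) // IsFuzzyTopology hm τ ∧ τ.card = 4}
      = N := by
    rw [Fintype.card_subtype]
    rfl
  have e1 : biTauF n m 4 hm = N * (N + 1) / 2 := by
    rw [biTauF, Nat.card_eq_fintype_card, Sym2.card, e0, Nat.choose_two_right,
      Nat.add_sub_cancel, Nat.mul_comm]
  -- value of N as an integer
  have hTB : 2 * ((F4 n hm).filter (fun τ => ¬ chainP τ)).card + 2 = 2 ^ n := by
    rw [← TB_card hn hm2 hm]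
    exact card_Bpairs hn hm2 hm
  have hpow : (2 : ℕ) ^ n = 2 * 2 ^ (n - 1) := by
    rw [← pow_succ']
    congr 1
    omega
  have hTBval : (((F4 n hm).filter (fun τ => ¬ chainP τ)).card : ℤ)
      = 2 ^ (n - 1) - 1 := by
    have h1 : ((F4 n hm).filter (fun τ => ¬ chainP τ)).card + 1 = 2 ^ (n - 1) := by omega
    have := congrArg (fun x : ℕ => (x : ℤ)) h1
    push_cast at this
    linarith
  have hNval : (N : ℤ) = ((m * (m + 1) / 2 : ℕ) : ℤ) ^ n - 3 * (m : ℤ) ^ n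
      + 2 ^ (n - 1) + 2 := by
    have hsplit := F4_split (n := n) hm
    have hA := card_Apairs hn hm2 hm
    have hTA := TA_card hn hm2 hm
    have : (N : ℤ) = ((Apairs n hm).card : ℤ)
        + (((F4 n hm).filter (fun τ => ¬ chainP τ)).card : ℤ) := by
      rw [hN]
      rw [hsplit, ← hTA]
      push_cast
      ring
    rw [this, hA, hTBval]
    ring
  rw [e1]
  have e2 : ((N * (N + 1) / 2 : ℕ) : ℤ) = (N : ℤ) * ((N : ℤ) + 1) / 2 := by
    rw [Int.natCast_ediv]
    push_cast
    rfl
  rw [e2, hNval]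

end FuzzyAux

theorem biTauF_four_open_sets (n m : ℕ) (hn : 1 ≤ n) (hm : 2 ≤ m) :
    (biTauF n m 4 (by omega) : ℤ) =
      (((m * (m + 1) / 2 : ℕ) : ℤ) ^ n - 3 * (m : ℤ) ^ n + 2 ^ (n - 1) + 2) *
        ((((m * (m + 1) / 2 : ℕ) : ℤ) ^ n - 3 * (m : ℤ) ^ n + 2 ^ (n - 1) + 2) + 1) / 2 := by
  have h := FuzzyAux.biTauF_formula n m hn hm (by omega)
  exact h
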